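/- Let n ∈ ℕ, let x : ℝ → ℝ^n be continuous with bounded image on [0,∞), and let S ⊆ ℝ^n be nonempty. Assume: (i) for every z ∈ S, the limit lim_{t→∞} ‖x(t) - z‖ exists; and (ii) every cluster point of x at infinity lies in S, i.e., whenever t_k → ∞ and x(t_k) → y for some sequence (t_k) and point y, then y ∈ S. Then there exists x* ∈ S such that x(t) → x* as t → ∞. -/

import Mathlib

open Filter MeasureTheory

theorem stmt_18 {n : ℕ} (x : ℝ → EuclideanSpace ℝ (Fin n)) (hx : Continuous x)
    (R : ℝ) (hxb : ∀ t : ℝ, 0 ≤ t → ‖x t‖ ≤ R)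
    (S : Set (EuclideanSpace ℝ (Fin n))) (hS : S.Nonempty)
    (hlim : ∀ z ∈ S, ∃ l : ℝ, Tendsto (fun t => ‖x t - z‖) atTop (nhds l))
    (hclus : ∀ (tk : ℕ → ℝ) (y : EuclideanSpace ℝ (Fin n)),
      Tendsto tk atTop atTop → Tendsto (fun k => x (tk k)) atTop (nhds y) → y ∈ S) :
    ∃ xstar ∈ S, Tendsto x atTop (nhds xstar) := by
  -- the sequence x(k), k ∈ ℕ, lies in the compact ball of radius R
  set u : ℕ → EuclideanSpace ℝ (Fin n) := fun k => x (k : ℝ) with hu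
  have hmem : ∀ k, u k ∈ Metric.closedBall (0 : EuclideanSpace ℝ (Fin n)) R := by
    intro k
    simpa [u, Metric.mem_closedBall, dist_eq_norm] using hxb (k : ℝ) (Nat.cast_nonneg k)
  obtain ⟨y, -, φ, hφ, hconv⟩ :=
    (isCompact_closedBall (0 : EuclideanSpace ℝ (Fin n)) R).tendsto_subseq hmem
  -- the times (φ k : ℝ) tend to infinity
  have htk : Tendsto (fun k => ((φ k : ℕ) : ℝ)) atTop atTop :=
    tendsto_natCast_atTop_atTop.comp hφ.tendsto_atTop
  have hyS : y ∈ S := hclus (fun k => ((φ k : ℕ) : ℝ)) y htk hconv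
  refine ⟨y, hyS, ?_⟩
  obtain ⟨l, hl⟩ := hlim y hyS
  -- along the subsequence, ‖x(t_k) - y‖ → 0, so l = 0
  have h1 : Tendsto (fun k => ‖x ((φ k : ℕ) : ℝ) - y‖) atTop (nhds l) := hl.comp htk
  have h2 : Tendsto (fun k => ‖x ((φ k : ℕ) : ℝ) - y‖) atTop (nhds 0) := by
    have := hconv.sub_const y
    simpa [Function.comp_def, hu] using (continuous_norm.tendsto _).comp this
  have hl0 : l = 0 := tendsto_nhds_unique h1 h2
  rw [hl0] at hl
  exact tendsto_iff_norm_sub_tendsto_zero.mpr hl
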